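/- arXiv:2002.06251 — 3 statements merged into one kernel-verified Lean document; each statement's English description precedes it below -/
import Mathlib

section
/- Let N_f and c be integers with 1 ≤ c ≤ N_f, and let S be the N_f × C(N_f,c) cache state matrix. For every vector x = (x_G), indexed by the c-element subsets G of {1,…,N_f}, with all entries nonnegative, one has ‖Sx‖² = Σ_{l=1}^{N_f} ( Σ_{G : l ∈ G} x_G )² ≥ c · Σ_G x_G² = c‖x‖². In particular, ‖Sx‖ ≥ √c for every nonnegative unit vector x. -/
/-- For the `N_f × C(N_f,c)` cache state matrix `S` (with `1 ≤ c ≤ N_f`)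
and every nonnegative vector `x` indexed by the `c`-element subsets `G` of `{1,…,N_f}`:
`‖Sx‖² = Σ_l (Σ_{G : l ∈ G} x_G)² ≥ c · Σ_G x_G² = c‖x‖²`; in particular `‖Sx‖ ≥ √c`
for every nonnegative unit vector `x`. -/
theorem cacheMatrix_norm_sq_lower_bound (Nf c : ℕ) (hc : 1 ≤ c) (hcN : c ≤ Nf)
    (S : Matrix (Fin Nf) {G : Finset (Fin Nf) // G.card = c} ℝ)
    (hS : ∀ (l : Fin Nf) (G : {G : Finset (Fin Nf) // G.card = c}),
      S l G = if l ∈ G.val then 1 else 0)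
    (x : {G : Finset (Fin Nf) // G.card = c} → ℝ) (hx : ∀ G, 0 ≤ x G) :
    (∑ l, (S.mulVec x l) ^ 2
        = ∑ l : Fin Nf,
            (∑ G ∈ Finset.univ.filter
              (fun G : {G : Finset (Fin Nf) // G.card = c} => l ∈ G.val), x G) ^ 2)
    ∧ (c : ℝ) * ∑ G, (x G) ^ 2 ≤ ∑ l, (S.mulVec x l) ^ 2
    ∧ (∑ G, (x G) ^ 2 = 1 →
        Real.sqrt c ≤ Real.sqrt (∑ l, (S.mulVec x l) ^ 2)) := by
  have heq : ∑ l, (S.mulVec x l) ^ 2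
      = ∑ l : Fin Nf,
          (∑ G ∈ Finset.univ.filter
            (fun G : {G : Finset (Fin Nf) // G.card = c} => l ∈ G.val), x G) ^ 2 := by
    refine Finset.sum_congr rfl fun l _ => ?_
    congr 1
    simp only [Matrix.mulVec, dotProduct, hS, Finset.sum_filter, ite_mul, one_mul,
      zero_mul]
  have hineq : (c : ℝ) * ∑ G, (x G) ^ 2 ≤ ∑ l, (S.mulVec x l) ^ 2 := by
    rw [heq]
    have key : (c : ℝ) * ∑ G, (x G) ^ 2
        = ∑ l : Fin Nf, ∑ G ∈ Finset.univ.filter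
            (fun G : {G : Finset (Fin Nf) // G.card = c} => l ∈ G.val), (x G) ^ 2 := by
      simp only [Finset.sum_filter]
      rw [Finset.sum_comm]
      rw [Finset.mul_sum]
      refine Finset.sum_congr rfl fun G _ => ?_
      rw [Finset.sum_ite_mem, Finset.univ_inter, Finset.sum_const, G.2, nsmul_eq_mul]
    rw [key]
    refine Finset.sum_le_sum fun l _ => ?_
    exact Finset.sum_sq_le_sq_sum_of_nonneg (fun G _ => hx G)
  refine ⟨heq, hineq, fun h1 => ?_⟩
  apply Real.sqrt_le_sqrt
  calc (c : ℝ) = c * ∑ G, (x G) ^ 2 := by rw [h1, mul_one]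
    _ ≤ _ := hineq
end

section
/- Let N_f and c be integers with 1 ≤ c < N_f, and let S be the N_f × C(N_f,c) cache state matrix. Then the N_f × N_f matrix S·Sᵀ is invertible (equivalently, positive definite). -/
open Finset Matrix

lemma key_sum_zero {Nf c : ℕ} (hc : 1 ≤ c) (hcN : c < Nf) (x : Fin Nf → ℝ)
    (h : ∀ G : Finset (Fin Nf), G.card = c → ∑ l ∈ G, x l = 0) : x = 0 := by
  -- all values of x are equal
  have hconst : ∀ i j : Fin Nf, x i = x j := by
    intro i j
    rcases eq_or_ne i j with rfl | hij
    · rfl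
    · have hcard : c - 1 ≤ (Finset.univ \ {i, j} : Finset (Fin Nf)).card := by
        rw [Finset.card_sdiff_of_subset (by simp), Finset.card_univ, Fintype.card_fin,
          Finset.card_pair hij]
        omega
      obtain ⟨T, hT, hTc⟩ := Finset.exists_subset_card_eq hcard
      have hiT : i ∉ T := fun hi => by simpa using (hT hi)
      have hjT : j ∉ T := fun hj => by simpa using (hT hj)
      have h1 := h (insert i T) (by rw [Finset.card_insert_of_notMem hiT, hTc]; omega)
      have h2 := h (insert j T) (by rw [Finset.card_insert_of_notMem hjT, hTc]; omega)
      rw [Finset.sum_insert hiT] at h1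
      rw [Finset.sum_insert hjT] at h2
      linarith
  funext i
  obtain ⟨G, -, hGc⟩ := Finset.exists_subset_card_eq
    (show c ≤ (Finset.univ : Finset (Fin Nf)).card by simp; omega)
  have hsum := h G hGc
  have : ∑ l ∈ G, x l = (c : ℝ) * x i := by
    rw [Finset.sum_congr rfl (fun l _ => hconst l i), Finset.sum_const, hGc,
      nsmul_eq_mul]
  rw [this] at hsum
  have hc0 : (c : ℝ) ≠ 0 := by positivity
  simpa using mul_eq_zero.mp hsum |>.resolve_left hc0

/-- For the `N_f × C(N_f,c)` cache state matrix `S` with `1 ≤ c < N_f`,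
the `N_f × N_f` matrix `S · Sᵀ` is invertible. -/
theorem cacheMatrix_mul_transpose_invertible (Nf c : ℕ) (hc : 1 ≤ c) (hcN : c < Nf)
    (S : Matrix (Fin Nf) {G : Finset (Fin Nf) // G.card = c} ℝ)
    (hS : ∀ (l : Fin Nf) (G : {G : Finset (Fin Nf) // G.card = c}),
      S l G = if l ∈ G.val then 1 else 0) :
    IsUnit (S * S.transpose) := by
  rw [← Matrix.mulVec_injective_iff_isUnit]
  have hker : ∀ x : Fin Nf → ℝ, (S * S.transpose).mulVec x = 0 → x = 0 := by
    intro x hx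
    have hdot : x ⬝ᵥ (S * S.transpose).mulVec x = 0 := by rw [hx]; simp
    rw [← Matrix.mulVec_mulVec, Matrix.dotProduct_mulVec,
      ← Matrix.mulVec_transpose] at hdot
    have hy : S.transpose.mulVec x = 0 := dotProduct_self_eq_zero.mp hdot
    apply key_sum_zero hc hcN
    intro G hG
    have := congrFun hy ⟨G, hG⟩
    simp only [Matrix.mulVec, Matrix.transpose_apply, dotProduct, hS,
      Pi.zero_apply] at this
    rw [← this]
    rw [Finset.sum_congr rfl (fun l (_ : l ∈ Finset.univ) =>
      show (if l ∈ G then (1:ℝ) else 0) * x l = if l ∈ G then x l else 0 by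
        split <;> simp), Finset.sum_ite_mem, Finset.univ_inter]
  intro a b hab
  have : (S * S.transpose).mulVec (a - b) = 0 := by
    rw [Matrix.mulVec_sub, hab, sub_self]
  have := hker _ this
  exact sub_eq_zero.mp this
end

section
/- Let N_f and c be integers with 1 ≤ c ≤ N_f, and let p = (p_1,…,p_{N_f}) be a real vector with 0 ≤ p_k ≤ 1 for all k and Σ_{k=1}^{N_f} p_k = c. Then there exists a probability vector η, indexed by the c-element subsets of {1,…,N_f}, such that S η = p, where S is the cache state matrix; that is, every vector of content caching probabilities summing to the cache size c can be implemented by a probabilistic placement over cache states that each store exactly c contents. -/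
open Finset

/-- Base case: if every entry of `p` is 0 or 1, then `p` is the indicator of a set. -/
lemma cache_base (Nf c : ℕ) (p : Fin Nf → ℝ)
    (h01 : ∀ k, p k = 0 ∨ p k = 1)
    (hpsum : ∑ k, p k = (c : ℝ)) :
    ∃ η : {G : Finset (Fin Nf) // G.card = c} → ℝ,
      (∀ G, 0 ≤ η G) ∧ (∑ G, η G = 1) ∧
      ∀ l, (∑ G, (if l ∈ G.val then η G else 0)) = p l := by
  classical
  set G : Finset (Fin Nf) := univ.filter (fun k => p k = 1) with hG
  have hpk : ∀ k, p k = if k ∈ G then 1 else 0 := by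
    intro k
    rcases h01 k with h | h <;> simp [hG, h]
  have hsum : ∑ k, p k = (G.card : ℝ) := by
    rw [Finset.sum_congr rfl fun k _ => hpk k]
    simp
  have hGc : G.card = c := by
    have := hsum.symm.trans hpsum
    exact_mod_cast this
  refine ⟨fun H => if H = ⟨G, hGc⟩ then 1 else 0, ?_, ?_, ?_⟩
  · intro H; by_cases h : H = ⟨G, hGc⟩ <;> simp [h]
  · simp
  · intro l
    have hterm : ∀ H : {G : Finset (Fin Nf) // G.card = c},
        (if l ∈ H.val then (if H = ⟨G, hGc⟩ then (1:ℝ) else 0) else 0)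
        = if H = ⟨G, hGc⟩ then (if l ∈ G then (1:ℝ) else 0) else 0 := by
      intro H
      by_cases h : H = ⟨G, hGc⟩ <;> simp [h]
    rw [Finset.sum_congr rfl fun H _ => hterm H, Finset.sum_ite_eq' univ]
    simp [hpk l]

set_option maxHeartbeats 1000000 in
lemma cache_key (Nf c : ℕ) :
    ∀ n : ℕ, ∀ p : Fin Nf → ℝ, (∀ k, 0 ≤ p k) → (∀ k, p k ≤ 1) →
    (∑ k, p k = (c : ℝ)) →
    ((univ.filter (fun k => p k ≠ 0 ∧ p k ≠ 1)).card ≤ n) →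
    ∃ η : {G : Finset (Fin Nf) // G.card = c} → ℝ,
      (∀ G, 0 ≤ η G) ∧ (∑ G, η G = 1) ∧
      ∀ l, (∑ G, (if l ∈ G.val then η G else 0)) = p l := by
  classical
  intro n
  induction n with
  | zero =>
    intro p hp0 hp1 hpsum hcard
    have hF : (univ.filter (fun k => p k ≠ 0 ∧ p k ≠ 1)) = ∅ :=
      Finset.card_eq_zero.mp (Nat.le_zero.mp hcard)
    have h01 : ∀ k, p k = 0 ∨ p k = 1 := by
      intro k
      by_contra h
      push_neg at h
      have : k ∈ (univ.filter (fun k => p k ≠ 0 ∧ p k ≠ 1)) := by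
        simp [h.1, h.2]
      simp [hF] at this
    exact cache_base Nf c p h01 hpsum
  | succ n ih =>
    intro p hp0 hp1 hpsum hcard
    set F : Finset (Fin Nf) := univ.filter (fun k => p k ≠ 0 ∧ p k ≠ 1) with hFdef
    by_cases hFe : F = ∅
    · have h01 : ∀ k, p k = 0 ∨ p k = 1 := by
        intro k
        by_contra h
        push_neg at h
        have : k ∈ F := by simp [hFdef, h.1, h.2]
        simp [hFe] at this
      exact cache_base Nf c p h01 hpsum
    · obtain ⟨i, hi⟩ := Finset.nonempty_of_ne_empty hFe
      have hiF : p i ≠ 0 ∧ p i ≠ 1 := by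
        have := hi; simp [hFdef] at this; exact this
      -- there is a second fractional index
      have h2 : ∃ j ∈ F, j ≠ i := by
        by_contra hcon
        push_neg at hcon
        -- then all other entries are 0/1 and the sum can't be an integer
        have hbin : ∀ k ∈ univ.erase i, p k = if p k = 1 then (1:ℝ) else 0 := by
          intro k hk
          have hki : k ≠ i := (Finset.mem_erase.mp hk).1
          have : k ∉ F := fun h => hki (hcon k h)
          simp [hFdef] at this
          rcases eq_or_ne (p k) 0 with h | h
          · simp [h]
          · simp [this h]
        have htail : ∑ k ∈ univ.erase i, p k
            = (((univ.erase i).filter (fun k => p k = 1)).card : ℝ) := by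
          rw [Finset.sum_congr rfl hbin]
          simp [Finset.sum_boole]
        set m := ((univ.erase i).filter (fun k => p k = 1)).card with hm
        have hsplit : p i + ∑ k ∈ univ.erase i, p k = (c : ℝ) := by
          rw [Finset.add_sum_erase univ p (Finset.mem_univ i)]
          exact hpsum
        have hpi : p i = (c : ℝ) - m := by
          rw [htail] at hsplit; linarith
        have hpi0 : 0 < p i := lt_of_le_of_ne (hp0 i) (Ne.symm hiF.1)
        have hpi1 : p i < 1 := lt_of_le_of_ne (hp1 i) hiF.2
        have h1 : (m : ℝ) < c := by rw [hpi] at hpi0; linarith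
        have h2' : (c : ℝ) < m + 1 := by rw [hpi] at hpi1; linarith
        have h1n : m < c := by exact_mod_cast h1
        have h2n : c < m + 1 := by exact_mod_cast h2'
        omega
      obtain ⟨j, hjF, hji⟩ := h2
      have hjF' : p j ≠ 0 ∧ p j ≠ 1 := by
        have := hjF; simp [hFdef] at this; exact this
      have hpi0 : 0 < p i := lt_of_le_of_ne (hp0 i) (Ne.symm hiF.1)
      have hpi1 : p i < 1 := lt_of_le_of_ne (hp1 i) hiF.2
      have hpj0 : 0 < p j := lt_of_le_of_ne (hp0 j) (Ne.symm hjF'.1)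
      have hpj1 : p j < 1 := lt_of_le_of_ne (hp1 j) hjF'.2
      set t1 : ℝ := min (1 - p i) (p j) with ht1
      set t2 : ℝ := min (p i) (1 - p j) with ht2
      have ht1pos : 0 < t1 := lt_min (by linarith) hpj0
      have ht2pos : 0 < t2 := lt_min hpi0 (by linarith)
      set q : Fin Nf → ℝ := fun k => if k = i then p i + t1 else if k = j then p j - t1 else p k with hq
      set r : Fin Nf → ℝ := fun k => if k = i then p i - t2 else if k = j then p j + t2 else p k with hr
      have hqi : q i = p i + t1 := by simp [hq]
      have hqj : q j = p j - t1 := by simp [hq, hji]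
      have hri : r i = p i - t2 := by simp [hr]
      have hrj : r j = p j + t2 := by simp [hr, hji]
      have hqo : ∀ k, k ≠ i → k ≠ j → q k = p k := by intro k h1 h2; simp [hq, h1, h2]
      have hro : ∀ k, k ≠ i → k ≠ j → r k = p k := by intro k h1 h2; simp [hr, h1, h2]
      -- bounds for q
      have hq0 : ∀ k, 0 ≤ q k := by
        intro k
        rcases eq_or_ne k i with h | h
        · rw [h, hqi]; linarith
        rcases eq_or_ne k j with h' | h'
        · rw [h', hqj]
          have := min_le_right (1 - p i) (p j)
          rw [← ht1] at this; linarith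
        · rw [hqo k h h']; exact hp0 k
      have hq1 : ∀ k, q k ≤ 1 := by
        intro k
        rcases eq_or_ne k i with h | h
        · rw [h, hqi]
          have := min_le_left (1 - p i) (p j)
          rw [← ht1] at this; linarith
        rcases eq_or_ne k j with h' | h'
        · rw [h', hqj]; linarith
        · rw [hqo k h h']; exact hp1 k
      have hr0 : ∀ k, 0 ≤ r k := by
        intro k
        rcases eq_or_ne k i with h | h
        · rw [h, hri]
          have := min_le_left (p i) (1 - p j)
          rw [← ht2] at this; linarith
        rcases eq_or_ne k j with h' | h'
        · rw [h', hrj]; linarith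
        · rw [hro k h h']; exact hp0 k
      have hr1 : ∀ k, r k ≤ 1 := by
        intro k
        rcases eq_or_ne k i with h | h
        · rw [h, hri]; linarith
        rcases eq_or_ne k j with h' | h'
        · rw [h', hrj]
          have := min_le_right (p i) (1 - p j)
          rw [← ht2] at this; linarith
        · rw [hro k h h']; exact hp1 k
      -- sums
      have hdiffsum : ∀ (t : ℝ) (f : Fin Nf → ℝ),
          (∀ k, k ≠ i → k ≠ j → f k = p k) → f i = p i + t → f j = p j - t →
          ∑ k, f k = ∑ k, p k := by
        intro t f hfo hfi hfj
        have : ∀ k, f k = p k + ((if k = i then t else 0) + (if k = j then -t else 0)) := by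
          intro k
          rcases eq_or_ne k i with h | h
          · rw [h, hfi, if_pos rfl, if_neg (Ne.symm hji)]; ring
          rcases eq_or_ne k j with h' | h'
          · rw [h', hfj, if_neg hji, if_pos rfl]; ring
          · rw [hfo k h h', if_neg h, if_neg h']; ring
        rw [Finset.sum_congr rfl fun k _ => this k]
        rw [Finset.sum_add_distrib, Finset.sum_add_distrib]
        simp [Finset.sum_ite_eq']
      have hqsum : ∑ k, q k = (c : ℝ) := by
        rw [hdiffsum t1 q hqo hqi hqj]; exact hpsum
      have hrsum : ∑ k, r k = (c : ℝ) := by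
        rw [hdiffsum (-t2) r hro (by rw [hri]; ring) (by rw [hrj]; ring)]; exact hpsum
      -- fractional sets shrink
      have hsub : ∀ f : Fin Nf → ℝ, (∀ k, k ≠ i → k ≠ j → f k = p k) →
          ∀ w, ((f w = 0 ∨ f w = 1) ∧ (w = i ∨ w = j)) →
          (univ.filter (fun k => f k ≠ 0 ∧ f k ≠ 1)).card ≤ n := by
        intro f hfo w ⟨hw01, hwij⟩
        have hwF : w ∈ F := by rcases hwij with h | h <;> subst h <;> assumption
        have hsub' : (univ.filter (fun k => f k ≠ 0 ∧ f k ≠ 1)) ⊆ F.erase w := by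
          intro k hk
          simp only [Finset.mem_filter, Finset.mem_univ, true_and] at hk
          rw [Finset.mem_erase]
          constructor
          · intro hkw; subst hkw
            rcases hw01 with h | h
            · exact hk.1 h
            · exact hk.2 h
          · rcases eq_or_ne k i with h | h
            · subst h; exact hi
            rcases eq_or_ne k j with h' | h'
            · subst h'; exact hjF
            · rw [hfo k h h'] at hk
              simp [hFdef, hk.1, hk.2]
        have h1 := Finset.card_le_card hsub'
        have h2 := Finset.card_erase_of_mem hwF
        have h3 : 1 ≤ F.card := Finset.card_pos.mpr ⟨i, hi⟩
        omega
      have hqcard : (univ.filter (fun k => q k ≠ 0 ∧ q k ≠ 1)).card ≤ n := by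
        rcases min_cases (1 - p i) (p j) with ⟨he, _⟩ | ⟨he, _⟩
        · exact hsub q hqo i ⟨Or.inr (by rw [hqi, ht1, he]; ring), Or.inl rfl⟩
        · exact hsub q hqo j ⟨Or.inl (by rw [hqj, ht1, he]; ring), Or.inr rfl⟩
      have hrcard : (univ.filter (fun k => r k ≠ 0 ∧ r k ≠ 1)).card ≤ n := by
        rcases min_cases (p i) (1 - p j) with ⟨he, _⟩ | ⟨he, _⟩
        · exact hsub r hro i ⟨Or.inl (by rw [hri, ht2, he]; ring), Or.inl rfl⟩
        · exact hsub r hro j ⟨Or.inr (by rw [hrj, ht2, he]; ring), Or.inr rfl⟩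
      obtain ⟨ηq, hηq0, hηq1, hηqe⟩ := ih q hq0 hq1 hqsum hqcard
      obtain ⟨ηr, hηr0, hηr1, hηre⟩ := ih r hr0 hr1 hrsum hrcard
      set a : ℝ := t2 / (t1 + t2) with ha
      set b : ℝ := t1 / (t1 + t2) with hb
      have hts : (0:ℝ) < t1 + t2 := by linarith
      have ha0 : 0 ≤ a := div_nonneg (le_of_lt ht2pos) (le_of_lt hts)
      have hb0 : 0 ≤ b := div_nonneg (le_of_lt ht1pos) (le_of_lt hts)
      have hab : a + b = 1 := by
        rw [ha, hb]; field_simp; ring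
      refine ⟨fun H => a * ηq H + b * ηr H, ?_, ?_, ?_⟩
      · intro H
        have := hηq0 H; have := hηr0 H
        positivity
      · rw [Finset.sum_add_distrib, ← Finset.mul_sum, ← Finset.mul_sum, hηq1, hηr1]
        simpa using hab
      · intro l
        have hterm : ∀ H : {G : Finset (Fin Nf) // G.card = c},
            (if l ∈ H.val then a * ηq H + b * ηr H else 0)
            = a * (if l ∈ H.val then ηq H else 0) + b * (if l ∈ H.val then ηr H else 0) := by
          intro H; by_cases h : l ∈ H.val <;> simp [h]
        rw [Finset.sum_congr rfl fun H _ => hterm H, Finset.sum_add_distrib,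
          ← Finset.mul_sum, ← Finset.mul_sum, hηqe l, hηre l]
        -- now show a * q l + b * r l = p l
        have habt : a * t1 - b * t2 = 0 := by
          rw [ha, hb]; field_simp; ring
        rcases eq_or_ne l i with h | h
        · rw [h, hqi, hri]; linear_combination p i * hab + habt
        rcases eq_or_ne l j with h' | h'
        · rw [h', hqj, hrj]; linear_combination p j * hab - habt
        · rw [hqo l h h', hro l h h']; linear_combination p l * hab

/-- Let `1 ≤ c ≤ N_f` and let `p` satisfy `0 ≤ p_k ≤ 1` for all `k`
and `Σ_k p_k = c`. Then there exists a probability vector `η` over the `c`-element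
subsets of `{1,…,N_f}` with `S η = p`, where `S` is the cache state matrix. -/
theorem cacheMatrix_placement_feasible (Nf c : ℕ) (hc : 1 ≤ c) (hcN : c ≤ Nf)
    (S : Matrix (Fin Nf) {G : Finset (Fin Nf) // G.card = c} ℝ)
    (hS : ∀ (l : Fin Nf) (G : {G : Finset (Fin Nf) // G.card = c}),
      S l G = if l ∈ G.val then 1 else 0)
    (p : Fin Nf → ℝ) (hp0 : ∀ k, 0 ≤ p k) (hp1 : ∀ k, p k ≤ 1)
    (hpsum : ∑ k, p k = (c : ℝ)) :
    ∃ η : {G : Finset (Fin Nf) // G.card = c} → ℝ,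
      (∀ G, 0 ≤ η G) ∧ (∑ G, η G = 1) ∧ S.mulVec η = p := by
  classical
  obtain ⟨η, h0, h1, he⟩ := cache_key Nf c
    ((univ.filter (fun k => p k ≠ 0 ∧ p k ≠ 1)).card) p hp0 hp1 hpsum le_rfl
  refine ⟨η, h0, h1, ?_⟩
  funext l
  rw [← he l]
  simp only [Matrix.mulVec, dotProduct, hS, ite_mul, one_mul, zero_mul]
end
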